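/- Let P and Q be distinct nonprincipal ultrafilters on ℕ with ℙ ∈ P and ℙ ∈ Q. If there is exactly one ultrafilter F on ℕ satisfying AB ∈ F for all A ∈ P and B ∈ Q with A ⊆ ℙ, B ⊆ ℙ and A ∩ B = ∅, then both P and Q are P-points. -/

import Mathlib

/-- The set of primes, as a subset of the positive integers. -/
def primes : Set ℕ+ := {p | (p : ℕ).Prime}

/-- `AB = {ab : a ∈ A, b ∈ B}`. -/
def setMul (A B : Set ℕ+) : Set ℕ+ := {x | ∃ a ∈ A, ∃ b ∈ B, x = a * b}

/-- A nonprincipal ultrafilter `U` is a P-point if for every partition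
`{A_n : n ∈ ω}` of `ℕ` with `A_n ∉ U` for all `n` there is `B ∈ U` such that
`B ∩ A_n` is finite for every `n`. -/
def PPoint (U : Ultrafilter ℕ+) : Prop :=
  (∀ m : ℕ+, U ≠ pure m) ∧
  ∀ A : ℕ → Set ℕ+, (∀ n, A n ∉ U) → (∀ m n, m ≠ n → A m ∩ A n = ∅) →
    (⋃ n, A n) = Set.univ → ∃ B ∈ U, ∀ n, (B ∩ A n).Finite

lemma setMul_comm (A B : Set ℕ+) : setMul A B = setMul B A := by
  ext x
  constructor <;> rintro ⟨a, ha, b, hb, rfl⟩ <;> exact ⟨b, hb, a, ha, mul_comm a b⟩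

lemma setMul_mono {A A' B B' : Set ℕ+} (hA : A' ⊆ A) (hB : B' ⊆ B) :
    setMul A' B' ⊆ setMul A B := by
  rintro x ⟨a, ha, b, hb, rfl⟩; exact ⟨a, hA ha, b, hB hb, rfl⟩

lemma factor_unique {p q p' q' : ℕ+} (hp : (p:ℕ).Prime) (hq : (q:ℕ).Prime)
    (hp' : (p':ℕ).Prime) (hq' : (q':ℕ).Prime) (h1 : p < q) (h2 : p' < q')
    (h : p * q = p' * q') : p = p' ∧ q = q' := by
  have hN : (p:ℕ) * q = (p':ℕ) * q' := by exact_mod_cast congrArg (fun x : ℕ+ => (x:ℕ)) h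
  have hdvd : (p':ℕ) ∣ (p:ℕ) * q := ⟨q', hN⟩
  rcases (Nat.Prime.dvd_mul hp').mp hdvd with hd | hd
  · have hpe : (p':ℕ) = p := ((Nat.prime_dvd_prime_iff_eq hp' hp).mp hd)
    have hpp : p = p' := PNat.coe_injective hpe.symm
    refine ⟨hpp, ?_⟩
    have : (q:ℕ) = q' := by
      have hppos : 0 < (p:ℕ) := p.pos
      apply Nat.eq_of_mul_eq_mul_left hppos
      rw [hN, hpe]
    exact PNat.coe_injective this
  · exfalso
    have hpe : (p':ℕ) = q := ((Nat.prime_dvd_prime_iff_eq hp' hq).mp hd)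
    have hqq : p' = q := PNat.coe_injective hpe
    -- p * q = q * q', so p = q'
    have hq'e : (p:ℕ) = q' := by
      have hqpos : 0 < (q:ℕ) := q.pos
      apply Nat.eq_of_mul_eq_mul_left hqpos
      rw [Nat.mul_comm (q:ℕ) (p:ℕ), hN, hpe]
    have : p = q' := PNat.coe_injective hq'e
    -- p' < q' = p < q = p'
    have : p' < p' := lt_trans (this ▸ h2) (hqq ▸ h1)
    exact lt_irrefl _ this

def badSet (i : ℕ+ → ℕ) : Set ℕ+ :=
  {x | ∃ p q : ℕ+, (p:ℕ).Prime ∧ (q:ℕ).Prime ∧ p < q ∧ i q < i p ∧ x = p * q}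

lemma mem_badSet {i : ℕ+ → ℕ} {a b : ℕ+} (ha : (a:ℕ).Prime) (hb : (b:ℕ).Prime)
    (hab : a < b) : a * b ∈ badSet i ↔ i b < i a := by
  constructor
  · rintro ⟨p, q, hp, hq, hpq, hi, he⟩
    obtain ⟨rfl, rfl⟩ := factor_unique ha hb hp hq hab hpq he
    exact hi
  · intro h; exact ⟨a, b, ha, hb, hab, h, rfl⟩

lemma combo (C : ℕ → Set ℕ+) (i : ℕ+ → ℕ)
    (hi : ∀ x, x ∈ C (i x)) (hiu : ∀ {x : ℕ+} {n : ℕ}, x ∈ C n → i x = n)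
    (A B : Set ℕ+) (hApr : A ⊆ primes) (hBpr : B ⊆ primes)
    (nA : ℕ) (hnA : (A ∩ C nA).Infinite)
    (hAunb : ∀ m, ∃ a ∈ A, m < i a)
    (hBinf : B.Infinite) :
    (∃ a ∈ A, ∃ b ∈ B, a * b ∈ badSet i) ∧ (∃ a ∈ A, ∃ b ∈ B, a * b ∉ badSet i) := by
  have hiA : ∀ {a : ℕ+}, a ∈ A ∩ C nA → i a = nA := fun h => hiu h.2
  constructor
  · -- in badSet
    by_cases hcase : ∃ b ∈ B, nA < i b
    · obtain ⟨b, hbB, hnb⟩ := hcase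
      obtain ⟨a, haA, hba⟩ := hnA.exists_gt b
      refine ⟨a, haA.1, b, hbB, ?_⟩
      rw [mul_comm]
      rw [mem_badSet (hBpr hbB) (hApr haA.1) hba, hiA haA]
      exact hnb
    · push_neg at hcase
      -- all indices of B are ≤ nA; some fiber of B is infinite
      have hBsub : B ⊆ ⋃ k ∈ Finset.range (nA + 1), (B ∩ C k) := by
        intro b hb
        exact Set.mem_biUnion (Finset.mem_range.mpr (Nat.lt_succ_of_le (hcase b hb)))
          ⟨hb, hi b⟩
      obtain ⟨m, hmmem, hm⟩ : ∃ m ∈ Finset.range (nA + 1), (B ∩ C m).Infinite := by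
        by_contra hall
        push_neg at hall
        have : (⋃ k ∈ Finset.range (nA + 1), (B ∩ C k)).Finite :=
          Set.Finite.biUnion (Finset.finite_toSet _) fun k hk => hall k hk
        exact hBinf (this.subset hBsub)
      have hmle : m ≤ nA := Nat.lt_succ_iff.mp (Finset.mem_range.mp hmmem)
      obtain ⟨a, haA, hma⟩ := hAunb nA
      obtain ⟨b, hbB, hab⟩ := hm.exists_gt a
      refine ⟨a, haA, b, hbB.1, ?_⟩
      rw [mem_badSet (hApr haA) (hBpr hbB.1) hab, hiu hbB.2]
      omega
  · -- not in badSet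
    by_cases hfib : ∃ m, (B ∩ C m).Infinite
    · obtain ⟨m, hm⟩ := hfib
      by_cases hmn : nA ≤ m
      · obtain ⟨a, haA⟩ := hnA.nonempty
        obtain ⟨b, hbB, hab⟩ := hm.exists_gt a
        refine ⟨a, haA.1, b, hbB.1, ?_⟩
        rw [mem_badSet (hApr haA.1) (hBpr hbB.1) hab, hiu hbB.2, hiA haA]
        omega
      · obtain ⟨b, hbB⟩ := hm.nonempty
        obtain ⟨a, haA, hba⟩ := hnA.exists_gt b
        refine ⟨a, haA.1, b, hbB.1, ?_⟩
        rw [mul_comm, mem_badSet (hBpr hbB.1) (hApr haA.1) hba, hiA haA, hiu hbB.2]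
        omega
    · push_neg at hfib
      have hB' : {b ∈ B | nA < i b}.Infinite := by
        by_contra hfin
        rw [Set.not_infinite] at hfin
        have hsub : B ⊆ {b ∈ B | nA < i b} ∪ ⋃ k ∈ Finset.range (nA + 1), (B ∩ C k) := by
          intro b hb
          by_cases h : nA < i b
          · exact Or.inl ⟨hb, h⟩
          · exact Or.inr (Set.mem_biUnion (Finset.mem_range.mpr (by omega)) ⟨hb, hi b⟩)
        have : ({b ∈ B | nA < i b} ∪ ⋃ k ∈ Finset.range (nA + 1), (B ∩ C k)).Finite :=
          hfin.union (Set.Finite.biUnion (Finset.finite_toSet _)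
            fun k _ => hfib k)
        exact hBinf (this.subset hsub)
      obtain ⟨a, haA⟩ := hnA.nonempty
      obtain ⟨b, hbB, hab⟩ := hB'.exists_gt a
      refine ⟨a, haA.1, b, hbB.1, ?_⟩
      rw [mem_badSet (hApr haA.1) (hBpr hbB.1) hab, hiA haA]
      have := hbB.2
      omega

lemma ultra_infinite {U : Ultrafilter ℕ+} (hnp : ∀ m : ℕ+, U ≠ pure m)
    {S : Set ℕ+} (hS : S ∈ U) : S.Infinite := by
  by_contra hfin
  rw [Set.not_infinite] at hfin
  obtain ⟨x, _, hx⟩ := Ultrafilter.eq_pure_of_finite_mem hfin hS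
  exact hnp x hx

lemma aux_ppoint (P Q : Ultrafilter ℕ+) (hPQ : P ≠ Q)
    (hnpP : ∀ m : ℕ+, P ≠ pure m) (hnpQ : ∀ m : ℕ+, Q ≠ pure m)
    (hP : primes ∈ P) (hQ : primes ∈ Q)
    (huniq : ∃! F : Ultrafilter ℕ+, ∀ A ∈ P, ∀ B ∈ Q,
      A ⊆ primes → B ⊆ primes → A ∩ B = ∅ → setMul A B ∈ F) :
    PPoint P := by
  refine ⟨hnpP, ?_⟩
  intro C hC hdisj hcov
  by_contra hcon
  push_neg at hcon
  -- index function
  have hcov' : ∀ x : ℕ+, ∃ n, x ∈ C n := by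
    intro x
    have : x ∈ ⋃ n, C n := by rw [hcov]; trivial
    exact Set.mem_iUnion.mp this
  choose i hi using hcov'
  have hiu : ∀ {x : ℕ+} {n : ℕ}, x ∈ C n → i x = n := by
    intro x n hx
    by_contra hne
    have h0 := hdisj (i x) n hne
    have : x ∈ C (i x) ∩ C n := ⟨hi x, hx⟩
    rw [h0] at this
    exact this
  -- admissible pairs
  set Adm : Set ℕ+ → Set ℕ+ → Prop :=
    fun A B => A ∈ P ∧ B ∈ Q ∧ A ⊆ primes ∧ B ⊆ primes ∧ A ∩ B = ∅ with hAdm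
  -- there is an admissible pair
  obtain ⟨S, hSP, hSQ⟩ : ∃ S, S ∈ P ∧ S ∉ Q := by
    by_contra hno
    push_neg at hno
    apply hPQ
    apply Ultrafilter.ext
    intro s
    constructor
    · exact hno s
    · intro hsQ
      by_contra hsP
      have := hno sᶜ (Ultrafilter.compl_mem_iff_notMem.mpr hsP)
      exact (Ultrafilter.compl_mem_iff_notMem.mp this) hsQ
  have hadm0 : Adm (S ∩ primes) (Sᶜ ∩ primes) := by
    refine ⟨Filter.inter_mem hSP hP,
      Filter.inter_mem (Ultrafilter.compl_mem_iff_notMem.mpr hSQ) hQ,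
      Set.inter_subset_right, Set.inter_subset_right, ?_⟩
    ext x
    simp only [Set.mem_inter_iff, Set.mem_compl_iff, Set.mem_empty_iff_false, iff_false]
    rintro ⟨⟨h1, _⟩, ⟨h2, _⟩⟩
    exact h2 h1
  -- base family and generated filter
  set 𝒮 : Set (Set ℕ+) := {s | ∃ A B, Adm A B ∧ s = setMul A B} with h𝒮
  -- every set in the generated filter contains an admissible product
  have hkey : ∀ s ∈ Filter.generate 𝒮, ∃ A B, Adm A B ∧ setMul A B ⊆ s := by
    intro s hs
    rw [Filter.mem_generate_iff] at hs
    obtain ⟨t, ht𝒮, htfin, hts⟩ := hs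
    suffices h : ∀ t : Set (Set ℕ+), t.Finite → t ⊆ 𝒮 →
        ∃ A B, Adm A B ∧ setMul A B ⊆ ⋂₀ t by
      obtain ⟨A, B, h1, h2⟩ := h t htfin ht𝒮
      exact ⟨A, B, h1, h2.trans hts⟩
    clear hts ht𝒮 htfin t
    intro t htfin
    refine Set.Finite.induction_on
      (motive := fun u _ => u ⊆ 𝒮 → ∃ A B, Adm A B ∧ setMul A B ⊆ ⋂₀ u) t htfin
      (fun _ => ⟨S ∩ primes, Sᶜ ∩ primes, hadm0, by simp⟩) ?_
    intro a t ha htfin ih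
    beta_reduce
    intro ht𝒮
    obtain ⟨A, B, hAB, hsub⟩ := ih (fun x hx => ht𝒮 (Set.mem_insert_of_mem a hx))
    obtain ⟨A', B', hAB', rfl⟩ := ht𝒮 (Set.mem_insert a t)
    refine ⟨A ∩ A', B ∩ B', ?_, ?_⟩
    · refine ⟨Filter.inter_mem hAB.1 hAB'.1,
        Filter.inter_mem hAB.2.1 hAB'.2.1,
        (Set.inter_subset_left).trans hAB.2.2.1,
        (Set.inter_subset_left).trans hAB.2.2.2.1, ?_⟩
      have : (A ∩ A') ∩ (B ∩ B') ⊆ A ∩ B := by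
        intro x hx; exact ⟨hx.1.1, hx.2.1⟩
      rw [← Set.subset_empty_iff]
      exact hAB.2.2.2.2 ▸ this
    · rw [Set.sInter_insert]
      intro x hx
      exact ⟨setMul_mono Set.inter_subset_right Set.inter_subset_right hx,
        hsub (setMul_mono Set.inter_subset_left Set.inter_subset_left hx)⟩
  -- the combinatorial facts for each admissible pair
  have hcombo : ∀ A B, Adm A B →
      (∃ x ∈ setMul A B, x ∈ badSet i) ∧ (∃ x ∈ setMul A B, x ∉ badSet i) := by
    intro A B hAB
    obtain ⟨hAP, hBQ, hApr, hBpr, _⟩ := hAB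
    obtain ⟨nA, hnA⟩ := hcon A hAP
    have hAunb : ∀ m, ∃ a ∈ A, m < i a := by
      intro m
      have hU : (⋃ k ∈ Set.Iic m, C k) ∉ P := by
        intro hmem
        rw [Ultrafilter.finite_biUnion_mem_iff (Set.finite_Iic m)] at hmem
        obtain ⟨k, _, hk⟩ := hmem
        exact hC k hk
      have : A ∩ (⋃ k ∈ Set.Iic m, C k)ᶜ ∈ P :=
        Filter.inter_mem hAP (Ultrafilter.compl_mem_iff_notMem.mpr hU)
      obtain ⟨a, haA, haC⟩ := Ultrafilter.nonempty_of_mem this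
      refine ⟨a, haA, ?_⟩
      by_contra hle
      push_neg at hle
      exact haC (Set.mem_biUnion (Set.mem_Iic.mpr hle) (hi a))
    have hBinf : B.Infinite := ultra_infinite hnpQ hBQ
    obtain ⟨⟨a, haA, b, hbB, hin⟩, ⟨a', haA', b', hbB', hout⟩⟩ :=
      combo C i hi hiu A B hApr hBpr nA hnA hAunb hBinf
    exact ⟨⟨a * b, ⟨a, haA, b, hbB, rfl⟩, hin⟩, ⟨a' * b', ⟨a', haA', b', hbB', rfl⟩, hout⟩⟩
  -- two different ultrafilters extending the base
  have hne1 : (Filter.generate 𝒮 ⊓ Filter.principal (badSet i)).NeBot := by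
    rw [Filter.inf_principal_neBot_iff]
    intro U hU
    obtain ⟨A, B, hAB, hsub⟩ := hkey U hU
    obtain ⟨⟨x, hx1, hx2⟩, _⟩ := hcombo A B hAB
    exact ⟨x, hsub hx1, hx2⟩
  have hne2 : (Filter.generate 𝒮 ⊓ Filter.principal (badSet i)ᶜ).NeBot := by
    rw [Filter.inf_principal_neBot_iff]
    intro U hU
    obtain ⟨A, B, hAB, hsub⟩ := hkey U hU
    obtain ⟨_, ⟨x, hx1, hx2⟩⟩ := hcombo A B hAB
    exact ⟨x, hsub hx1, hx2⟩
  set F₁ := @Ultrafilter.of _ _ hne1 with hF₁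
  set F₂ := @Ultrafilter.of _ _ hne2 with hF₂
  have hle1 : (F₁ : Filter ℕ+) ≤ Filter.generate 𝒮 ⊓ Filter.principal (badSet i) :=
    Ultrafilter.of_le _
  have hle2 : (F₂ : Filter ℕ+) ≤ Filter.generate 𝒮 ⊓ Filter.principal (badSet i)ᶜ :=
    Ultrafilter.of_le _
  obtain ⟨F₀, _, huni⟩ := huniq
  have hsat : ∀ (F : Ultrafilter ℕ+), (F : Filter ℕ+) ≤ Filter.generate 𝒮 →
      (∀ A ∈ P, ∀ B ∈ Q, A ⊆ primes → B ⊆ primes → A ∩ B = ∅ → setMul A B ∈ F) := by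
    intro F hle A hA B hB h1 h2 h3
    exact hle (Filter.mem_generate_of_mem ⟨A, B, ⟨hA, hB, h1, h2, h3⟩, rfl⟩)
  have he1 : F₁ = F₀ := huni F₁ (hsat F₁ (hle1.trans inf_le_left))
  have he2 : F₂ = F₀ := huni F₂ (hsat F₂ (hle2.trans inf_le_left))
  have hmem1 : badSet i ∈ F₀ := by
    rw [← he1]
    exact hle1 (Filter.mem_inf_of_right (Filter.mem_principal_self _))
  have hmem2 : (badSet i)ᶜ ∈ F₀ := by
    rw [← he2]
    exact hle2 (Filter.mem_inf_of_right (Filter.mem_principal_self _))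
  exact (Ultrafilter.compl_mem_iff_notMem.mp hmem2) hmem1

theorem stmt14 (P Q : Ultrafilter ℕ+) (hPQ : P ≠ Q)
    (hnpP : ∀ m : ℕ+, P ≠ pure m) (hnpQ : ∀ m : ℕ+, Q ≠ pure m)
    (hP : primes ∈ P) (hQ : primes ∈ Q)
    (huniq : ∃! F : Ultrafilter ℕ+, ∀ A ∈ P, ∀ B ∈ Q,
      A ⊆ primes → B ⊆ primes → A ∩ B = ∅ → setMul A B ∈ F) :
    PPoint P ∧ PPoint Q := by
  have huniq' : ∃! F : Ultrafilter ℕ+, ∀ A ∈ Q, ∀ B ∈ P,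
      A ⊆ primes → B ⊆ primes → A ∩ B = ∅ → setMul A B ∈ F := by
    obtain ⟨F₀, hF₀, huni⟩ := huniq
    refine ⟨F₀, ?_, ?_⟩
    · intro A hA B hB h1 h2 h3
      rw [setMul_comm]
      exact hF₀ B hB A hA h2 h1 (by rwa [Set.inter_comm])
    · intro F hF
      apply huni
      intro A hA B hB h1 h2 h3
      rw [setMul_comm]
      exact hF B hB A hA h2 h1 (by rwa [Set.inter_comm])
  exact ⟨aux_ppoint P Q hPQ hnpP hnpQ hP hQ huniq,
    aux_ppoint Q P hPQ.symm hnpQ hnpP hQ hP huniq'⟩
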